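/- Types of basis terms and of the null vector: (1) for any basis term b (a variable or an abstraction), context Γ and Scalar type T, if Γ ⊢ b : T then there exists a unit type U with T ≡ U; (2) for any context Γ and Scalar type T, if Γ ⊢ 0 : T then T ≡ 0̄. -/

import Mathlib

set_option autoImplicit false

namespace Lineal

/-! ### Lineal terms -/

inductive Trm (S : Type) : Type where
  | var : ℕ → Trm S
  | lam : Trm S → Trm S
  | app : Trm S → Trm S → Trm S
  | zero : Trm S
  | smul : S → Trm S → Trm S
  | add : Trm S → Trm S → Trm S

namespace Trm

variable {S : Type}

/-- Basis terms: variables and abstractions. -/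
def IsBasis : Trm S → Prop
  | var _ => True
  | lam _ => True
  | _ => False

/-- de Bruijn shift by `d` of variables `≥ c`. -/
def shift (d : ℕ) : ℕ → Trm S → Trm S
  | c, var k => if k < c then var k else var (k + d)
  | c, lam t => lam (shift d (c + 1) t)
  | c, app t r => app (shift d c t) (shift d c r)
  | _, zero => zero
  | c, smul a t => smul a (shift d c t)
  | c, add t r => add (shift d c t) (shift d c r)

/-- Capture-avoiding substitution `t[s / j]` (de Bruijn). -/
def subst : Trm S → Trm S → ℕ → Trm S
  | var k, s, j => if k = j then s else if j < k then var (k - 1) else var k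
  | lam t, s, j => lam (subst t (shift 1 0 s) (j + 1))
  | app t r, s, j => app (subst t s j) (subst r s j)
  | zero, _, _ => zero
  | smul a t, s, j => smul a (subst t s j)
  | add t r, s, j => add (subst t s j) (subst r s j)

/-- All free variables are `< n`. -/
def ClosedUnder : ℕ → Trm S → Prop
  | n, var k => k < n
  | n, lam t => ClosedUnder (n + 1) t
  | n, app t r => ClosedUnder n t ∧ ClosedUnder n r
  | _, zero => True
  | n, smul _ t => ClosedUnder n t
  | n, add t r => ClosedUnder n t ∧ ClosedUnder n r

/-- Closed terms. -/
def Closed (t : Trm S) : Prop := ClosedUnder 0 t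

def size : Trm S → ℕ
  | var _ => 1
  | lam t => size t + 1
  | app t r => size t + size r + 1
  | zero => 1
  | smul _ t => size t + 1
  | add t r => size t + size r + 1

/-- `(t) r₁ … rₙ`. -/
def appList (t : Trm S) (l : List (Trm S)) : Trm S := l.foldl app t

/-- `t + u₁ + … + uₙ`. -/
def sumList (t : Trm S) (l : List (Trm S)) : Trm S := l.foldl add t

/-- Lifting of a simultaneous substitution under a binder. -/
def msubstLift (ρ : ℕ → Trm S) : ℕ → Trm S
  | 0 => var 0
  | n + 1 => shift 1 0 (ρ n)

/-- Simultaneous substitution of all free variables. -/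
def msubst : (ℕ → Trm S) → Trm S → Trm S
  | ρ, var k => ρ k
  | ρ, lam t => lam (msubst (msubstLift ρ) t)
  | ρ, app t r => app (msubst ρ t) (msubst ρ r)
  | _, zero => zero
  | ρ, smul a t => smul a (msubst ρ t)
  | ρ, add t r => add (msubst ρ t) (msubst ρ r)

end Trm

/-! ### AC equivalence of terms (`+` associative and commutative) -/

inductive ACeq {S : Type} : Trm S → Trm S → Prop
  | refl (t : Trm S) : ACeq t t
  | symm {t u : Trm S} : ACeq t u → ACeq u t
  | trans {t u v : Trm S} : ACeq t u → ACeq u v → ACeq t v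
  | comm (t u : Trm S) : ACeq (Trm.add t u) (Trm.add u t)
  | assoc (t u v : Trm S) : ACeq (Trm.add (Trm.add t u) v) (Trm.add t (Trm.add u v))
  | lamCong {t t' : Trm S} : ACeq t t' → ACeq (Trm.lam t) (Trm.lam t')
  | appCong {t t' r r' : Trm S} : ACeq t t' → ACeq r r' → ACeq (Trm.app t r) (Trm.app t' r')
  | smulCong (a : S) {t t' : Trm S} : ACeq t t' → ACeq (Trm.smul a t) (Trm.smul a t')
  | addCong {t t' r r' : Trm S} : ACeq t t' → ACeq r r' → ACeq (Trm.add t r) (Trm.add t' r')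

/-! ### Reduction -/

/-- `t` is closed and normal (w.r.t. the step relation `St`). -/
def ClosedNormal {S : Type} (St : Trm S → Trm S → Prop) (t : Trm S) : Prop :=
  t.Closed ∧ ∀ u, ¬ St t u

/-- Root rules and one-level contextual closure, parameterised by the step relation `St`
used on proper subterms (both for congruence and for the closed-normal side conditions). -/
inductive Core {S : Type} [CommRing S] (St : Trm S → Trm S → Prop) : Trm S → Trm S → Prop
  -- Elementary rules
  | addZero (t : Trm S) : Core St (Trm.add t Trm.zero) t
  | zeroSmul (t : Trm S) : Core St (Trm.smul 0 t) Trm.zero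
  | oneSmul (t : Trm S) : Core St (Trm.smul 1 t) t
  | smulZero (a : S) : Core St (Trm.smul a Trm.zero) Trm.zero
  | smulSmul (a b : S) (t : Trm S) : Core St (Trm.smul a (Trm.smul b t)) (Trm.smul (a * b) t)
  | smulAdd (a : S) (t r : Trm S) :
      Core St (Trm.smul a (Trm.add t r)) (Trm.add (Trm.smul a t) (Trm.smul a r))
  -- Factorisation rules (side condition : t closed normal)
  | fact1 (a b : S) (t : Trm S) : ClosedNormal St t →
      Core St (Trm.add (Trm.smul a t) (Trm.smul b t)) (Trm.smul (a + b) t)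
  | fact2 (a : S) (t : Trm S) : ClosedNormal St t →
      Core St (Trm.add (Trm.smul a t) t) (Trm.smul (a + 1) t)
  | fact3 (t : Trm S) : ClosedNormal St t →
      Core St (Trm.add t t) (Trm.smul (1 + 1) t)
  -- Application rules
  | appAddL (t r u : Trm S) : ClosedNormal St (Trm.add t r) →
      Core St (Trm.app (Trm.add t r) u) (Trm.add (Trm.app t u) (Trm.app r u))
  | appAddR (u t r : Trm S) : ClosedNormal St (Trm.add t r) →
      Core St (Trm.app u (Trm.add t r)) (Trm.add (Trm.app u t) (Trm.app u r))
  | appSmulL (a : S) (t r : Trm S) : ClosedNormal St t →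
      Core St (Trm.app (Trm.smul a t) r) (Trm.smul a (Trm.app t r))
  | appSmulR (a : S) (r t : Trm S) : ClosedNormal St t →
      Core St (Trm.app r (Trm.smul a t)) (Trm.smul a (Trm.app r t))
  | appZeroL (t : Trm S) : Core St (Trm.app Trm.zero t) Trm.zero
  | appZeroR (t : Trm S) : Core St (Trm.app t Trm.zero) Trm.zero
  -- Beta reduction (b a basis term)
  | beta (t b : Trm S) : Trm.IsBasis b → Core St (Trm.app (Trm.lam t) b) (Trm.subst t b 0)
  -- Contextual closure
  | lamCong {t t' : Trm S} : St t t' → Core St (Trm.lam t) (Trm.lam t')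
  | appL {t t' : Trm S} (r : Trm S) : St t t' → Core St (Trm.app t r) (Trm.app t' r)
  | appR (t : Trm S) {r r' : Trm S} : St r r' → Core St (Trm.app t r) (Trm.app t r')
  | smulCong (a : S) {t t' : Trm S} : St t t' → Core St (Trm.smul a t) (Trm.smul a t')
  | addL {t t' : Trm S} (r : Trm S) : St t t' → Core St (Trm.add t r) (Trm.add t' r)
  | addR (t : Trm S) {r r' : Trm S} : St r r' → Core St (Trm.add t r) (Trm.add t r')

/-- Stratified step relation: `StepN n` is the one-step reduction (modulo AC),
adequate for terms of size at most `n`. -/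
def StepN {S : Type} [CommRing S] : ℕ → Trm S → Trm S → Prop
  | 0, _, _ => False
  | n + 1, t, t' => ∃ u u', ACeq t u ∧ Core (StepN n) u u' ∧ ACeq u' t'

/-- One-step reduction of Lineal, on terms considered modulo AC of `+`. -/
def Step {S : Type} [CommRing S] (t t' : Trm S) : Prop := StepN t.size t t'

/-- Many-step reduction. -/
def RedStar {S : Type} [CommRing S] : Trm S → Trm S → Prop := Relation.ReflTransGen Step

/-- `t` is strongly normalising: every reduction sequence from `t` is finite. -/
def StronglyNormalising {S : Type} [CommRing S] (t : Trm S) : Prop :=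
  Acc (fun a b => Step b a) t

/-- The set of strongly normalising terms. -/
def SNset (S : Type) [CommRing S] : Set (Trm S) := { t | StronglyNormalising t }

end Lineal

namespace Lineal

/-! ### Scalar types -/

inductive STy (S : Type) : Type where
  | var : ℕ → STy S
  | arrow : STy S → STy S → STy S
  | all : STy S → STy S
  | smul : S → STy S → STy S
  | zero : STy S

namespace STy

mutual
  /-- Unit types: `U ::= X | U → T | ∀X.U`. -/
  inductive IsUnit {S : Type} : STy S → Prop
    | var (n : ℕ) : IsUnit (STy.var n)
    | arrow {U T : STy S} : IsUnit U → WF T → IsUnit (STy.arrow U T)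
    | all {U : STy S} : IsUnit U → IsUnit (STy.all U)
  /-- Scalar types: `T ::= U | ∀X.T | α.T | 0̄`. -/
  inductive WF {S : Type} : STy S → Prop
    | unit {U : STy S} : IsUnit U → WF U
    | all {T : STy S} : WF T → WF (STy.all T)
    | smul (a : S) {T : STy S} : WF T → WF (STy.smul a T)
    | zero : WF STy.zero
end

variable {S : Type}

/-- de Bruijn shift of type variables. -/
def shiftTV (d : ℕ) : ℕ → STy S → STy S
  | c, var k => if k < c then var k else var (k + d)
  | c, arrow A B => arrow (shiftTV d c A) (shiftTV d c B)
  | c, all T => all (shiftTV d (c + 1) T)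
  | c, smul a T => smul a (shiftTV d c T)
  | _, zero => zero

/-- `T[U / j]`: capture-avoiding substitution for the type variable `j` (removing it). -/
def substTV : STy S → STy S → ℕ → STy S
  | var k, U, j => if k = j then shiftTV j 0 U else if j < k then var (k - 1) else var k
  | arrow A B, U, j => arrow (substTV A U j) (substTV B U j)
  | all T, U, j => all (substTV T U (j + 1))
  | smul a T, U, j => smul a (substTV T U j)
  | zero, _, _ => zero

/-- Abstract the free type variable `n` of `T` (at depth `c`), so that
`all (closeTV T n 0)` is `∀X.T` where `X` is the free variable `n`. -/
def closeTV : STy S → ℕ → ℕ → STy S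
  | var k, n, c => if k < c then var k else if k = n + c then var c else var (k + 1)
  | arrow A B, n, c => arrow (closeTV A n c) (closeTV B n c)
  | all T, n, c => all (closeTV T n (c + 1))
  | smul a T, n, c => smul a (closeTV T n c)
  | zero, _, _ => zero

/-- `T[U / X]` for a *free* type variable named `n` (no binder is removed). -/
def substFreeAux : STy S → ℕ → STy S → ℕ → STy S
  | var k, n, U, c => if k = n + c then shiftTV c 0 U else var k
  | arrow A B, n, U, c => arrow (substFreeAux A n U c) (substFreeAux B n U c)
  | all T, n, U, c => all (substFreeAux T n U (c + 1))
  | smul a T, n, U, c => smul a (substFreeAux T n U c)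
  | zero, _, _, _ => zero

def substFree (T : STy S) (n : ℕ) (U : STy S) : STy S := substFreeAux T n U 0

/-- Free type variables. -/
def ftvAux : STy S → ℕ → Finset ℕ
  | var k, c => if k < c then ∅ else {k - c}
  | arrow A B, c => ftvAux A c ∪ ftvAux B c
  | all T, c => ftvAux T (c + 1)
  | smul _ T, c => ftvAux T c
  | zero, _ => ∅

def ftv (T : STy S) : Finset ℕ := ftvAux T 0

end STy

/-- Free type variables of a context. -/
def ftvCtx {S : Type} (Γ : List (STy S)) : Finset ℕ :=
  Γ.foldr (fun T s => T.ftv ∪ s) ∅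

/-- Type equivalence `≡`: the least congruence with
`α.0̄ ≡ 0̄`, `0.T ≡ 0̄`, `1.T ≡ T`, `α.(β.T) ≡ (α×β).T`, `∀X.α.T ≡ α.∀X.T`. -/
inductive SEq {S : Type} [CommRing S] : STy S → STy S → Prop
  | refl (T : STy S) : SEq T T
  | symm {T T' : STy S} : SEq T T' → SEq T' T
  | trans {T T' T'' : STy S} : SEq T T' → SEq T' T'' → SEq T T''
  | smulZero (a : S) : SEq (STy.smul a STy.zero) STy.zero
  | zeroSmul (T : STy S) : SEq (STy.smul 0 T) STy.zero
  | oneSmul (T : STy S) : SEq (STy.smul 1 T) T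
  | smulSmul (a b : S) (T : STy S) : SEq (STy.smul a (STy.smul b T)) (STy.smul (a * b) T)
  | allSmul (a : S) (T : STy S) : SEq (STy.all (STy.smul a T)) (STy.smul a (STy.all T))
  | arrowCong {U U' T T' : STy S} : SEq U U' → SEq T T' → SEq (STy.arrow U T) (STy.arrow U' T')
  | allCong {T T' : STy S} : SEq T T' → SEq (STy.all T) (STy.all T')
  | smulCong (a : S) {T T' : STy S} : SEq T T' → SEq (STy.smul a T) (STy.smul a T')

/-- `T ≺ R` iff either `R ≡ ∀X.T`, or `T ≡ ∀X.S` and `R ≡ S[U/X]` for some unit type `U`. -/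
def Prec {S : Type} [CommRing S] (T R : STy S) : Prop :=
  (∃ n : ℕ, SEq R (STy.all (STy.closeTV T n 0))) ∨
  (∃ Sb U : STy S, STy.IsUnit U ∧ SEq T (STy.all Sb) ∧ SEq R (STy.substTV Sb U 0))

/-- `⪯` : reflexive and transitive closure of `≺`. -/
def PrecEq {S : Type} [CommRing S] : STy S → STy S → Prop := Relation.ReflTransGen Prec

/-! ### The Scalar typing judgment -/

inductive Typ {S : Type} [CommRing S] : List (STy S) → Trm S → STy S → Prop
  | ax {Γ : List (STy S)} {n : ℕ} {U : STy S} : Γ[n]? = some U → Typ Γ (Trm.var n) U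
  | equiv {Γ : List (STy S)} {t : Trm S} {T T' : STy S} : Typ Γ t T → SEq T T' → Typ Γ t T'
  | arrE {Γ : List (STy S)} {t r : Trm S} {U T : STy S} {a b : S} :
      Typ Γ t (STy.smul a (STy.arrow U T)) → Typ Γ r (STy.smul b U) →
      Typ Γ (Trm.app t r) (STy.smul (a * b) T)
  | arrI {Γ : List (STy S)} {t : Trm S} {U T : STy S} :
      STy.IsUnit U → Typ (U :: Γ) t T → Typ Γ (Trm.lam t) (STy.arrow U T)
  | allE {Γ : List (STy S)} {t : Trm S} {T U : STy S} :
      Typ Γ t (STy.all T) → STy.IsUnit U → Typ Γ t (STy.substTV T U 0)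
  | allI {Γ : List (STy S)} {t : Trm S} {T : STy S} :
      Typ (Γ.map (STy.shiftTV 1 0)) t T → Typ Γ t (STy.all T)
  | ax0 {Γ : List (STy S)} : Typ Γ Trm.zero STy.zero
  | addI {Γ : List (STy S)} {t r : Trm S} {T : STy S} {a b : S} :
      Typ Γ t (STy.smul a T) → Typ Γ r (STy.smul b T) →
      Typ Γ (Trm.add t r) (STy.smul (a + b) T)
  | smulI {Γ : List (STy S)} {t : Trm S} {T : STy S} (a : S) :
      Typ Γ t T → Typ Γ (Trm.smul a t) (STy.smul a T)

/-! ### λ2^la -/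

inductive FTy : Type where
  | var : ℕ → FTy
  | arrow : FTy → FTy → FTy
  | all : FTy → FTy

namespace FTy

def shiftTV (d : ℕ) : ℕ → FTy → FTy
  | c, var k => if k < c then var k else var (k + d)
  | c, arrow A B => arrow (shiftTV d c A) (shiftTV d c B)
  | c, all A => all (shiftTV d (c + 1) A)

def substTV : FTy → FTy → ℕ → FTy
  | var k, B, j => if k = j then shiftTV j 0 B else if j < k then var (k - 1) else var k
  | arrow A C, B, j => arrow (substTV A B j) (substTV C B j)
  | all A, B, j => all (substTV A B (j + 1))

end FTy

/-- The typing judgment of λ2^la : System F rules over Lineal terms plus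
`ax0`, `+I` and `sI`. -/
inductive FTyp {S : Type} [CommRing S] : List FTy → Trm S → FTy → Prop
  | ax {Γ : List FTy} {n : ℕ} {A : FTy} : Γ[n]? = some A → FTyp Γ (Trm.var n) A
  | arrE {Γ : List FTy} {t r : Trm S} {A B : FTy} :
      FTyp Γ t (FTy.arrow A B) → FTyp Γ r A → FTyp Γ (Trm.app t r) B
  | arrI {Γ : List FTy} {t : Trm S} {A B : FTy} :
      FTyp (A :: Γ) t B → FTyp Γ (Trm.lam t) (FTy.arrow A B)
  | allE {Γ : List FTy} {t : Trm S} {A : FTy} (B : FTy) :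
      FTyp Γ t (FTy.all A) → FTyp Γ t (FTy.substTV A B 0)
  | allI {Γ : List FTy} {t : Trm S} {A : FTy} :
      FTyp (Γ.map (FTy.shiftTV 1 0)) t A → FTyp Γ t (FTy.all A)
  | ax0 {Γ : List FTy} (A : FTy) : FTyp Γ Trm.zero A
  | addI {Γ : List FTy} {t r : Trm S} {A : FTy} :
      FTyp Γ t A → FTyp Γ r A → FTyp Γ (Trm.add t r) A
  | smulI {Γ : List FTy} {t : Trm S} {A : FTy} (a : S) :
      FTyp Γ t A → FTyp Γ (Trm.smul a t) A

/-! ### Saturated sets and the interpretation of λ2^la types -/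

/-- Saturated subsets of SN. -/
structure IsSaturated {S : Type} [CommRing S] (X : Set (Trm S)) : Prop where
  subset_sn : X ⊆ SNset S
  var_app : ∀ (n : ℕ) (l : List (Trm S)), (∀ u ∈ l, u ∈ SNset S) →
      Trm.appList (Trm.var n) l ∈ X
  beta_exp : ∀ (v b : Trm S) (l : List (Trm S)), b.IsBasis →
      Trm.appList (Trm.subst v b 0) l ∈ X → Trm.appList (Trm.app (Trm.lam v) b) l ∈ X
  add_mem : ∀ {t u : Trm S}, t ∈ X → u ∈ X → Trm.add t u ∈ X
  smul_iff : ∀ (a : S) (t : Trm S), t ∈ X ↔ Trm.smul a t ∈ X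
  sum_app : ∀ (u : Trm S) (us l : List (Trm S)),
      (∀ v ∈ u :: us, Trm.appList v l ∈ X) → Trm.appList (Trm.sumList u us) l ∈ X
  app_sum : ∀ (t v : Trm S) (vs l : List (Trm S)),
      (∀ w ∈ v :: vs, Trm.appList (Trm.app t w) l ∈ X) →
      Trm.appList (Trm.app t (Trm.sumList v vs)) l ∈ X
  smul_head : ∀ (a : S) (t : Trm S) (l : List (Trm S)),
      Trm.smul a (Trm.appList t l) ∈ X ↔ Trm.appList (Trm.smul a t) l ∈ X
  smul_arg : ∀ (a : S) (t : Trm S) (l₁ : List (Trm S)) (u : Trm S) (l₂ : List (Trm S)),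
      Trm.smul a (Trm.appList t (l₁ ++ u :: l₂)) ∈ X ↔
      Trm.appList t (l₁ ++ Trm.smul a u :: l₂) ∈ X
  zero_mem : Trm.zero ∈ X
  zero_app : ∀ l : List (Trm S), (∀ u ∈ l, u ∈ SNset S) → Trm.appList Trm.zero l ∈ X
  app_zero : ∀ (t : Trm S) (l : List (Trm S)), t ∈ SNset S → (∀ u ∈ l, u ∈ SNset S) →
      Trm.appList (Trm.app t Trm.zero) l ∈ X

/-- Extension of a type-variable valuation (de Bruijn). -/
def consVal {S : Type} (Y : Set (Trm S)) (ξ : ℕ → Set (Trm S)) : ℕ → Set (Trm S)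
  | 0 => Y
  | n + 1 => ξ n

/-- Interpretation `⟦A⟧_ξ` of a λ2^la type. -/
def FTy.interp {S : Type} [CommRing S] : FTy → (ℕ → Set (Trm S)) → Set (Trm S)
  | FTy.var n, ξ => ξ n
  | FTy.arrow A B, ξ => { F | ∀ s ∈ interp A ξ, Trm.app F s ∈ interp B ξ }
  | FTy.all A, ξ => ⋂ Y ∈ { X : Set (Trm S) | IsSaturated X }, interp A (consVal Y ξ)

/-- `ρ, ξ ⊨ Γ`. -/
def SatCtx {S : Type} [CommRing S] (ρ : ℕ → Trm S) (ξ : ℕ → Set (Trm S))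
    (Γ : List FTy) : Prop :=
  ∀ (n : ℕ) (A : FTy), Γ[n]? = some A → ρ n ∈ FTy.interp A ξ

/-- The `♮` map erasing scalars, sending `0̄` to a fixed λ2^la type `A`. -/
def STy.flat {S : Type} (A : FTy) : STy S → FTy
  | STy.var n => FTy.var n
  | STy.arrow U T => FTy.arrow (flat A U) (flat A T)
  | STy.all T => FTy.all (flat A T)
  | STy.smul _ T => flat A T
  | STy.zero => A

end Lineal
namespace Lineal
section Aux
variable {S : Type}

mutual
inductive CT (S : Type) : Type where
  | czero : CT S
  | cs : S → Sk S → CT S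
inductive Sk (S : Type) : Type where
  | svar : ℕ → Sk S
  | sarrow : CT S → CT S → Sk S
  | sall : Sk S → Sk S
end

variable [CommRing S]

def smulCT (a : S) : CT S → CT S
  | .czero => .czero
  | .cs b u => .cs (a * b) u

def allCT : CT S → CT S
  | .czero => .czero
  | .cs a u => .cs a (.sall u)

def canon : STy S → CT S
  | .var n => .cs 1 (.svar n)
  | .arrow A B => .cs 1 (.sarrow (canon A) (canon B))
  | .all T => allCT (canon T)
  | .smul a T => smulCT a (canon T)
  | .zero => .czero

def ctsc : CT S → S
  | .czero => 0
  | .cs a _ => a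

mutual
def CTEqF : CT S → CT S → Prop
  | .czero, .czero => True
  | .czero, .cs a _ => a = 0
  | .cs a _, .czero => a = 0
  | .cs a u, .cs b v => a = b ∧ (a = 0 ∨ SkEqF u v)
def SkEqF : Sk S → Sk S → Prop
  | .svar n, .svar m => n = m
  | .sarrow a b, .sarrow a' b' => CTEqF a a' ∧ CTEqF b b'
  | .sall u, .sall v => SkEqF u v
  | _, _ => False
end

mutual
def UnitCT : CT S → Prop
  | .czero => False
  | .cs a u => a = 1 ∧ GoodSk u
def GoodCT : CT S → Prop
  | .czero => True
  | .cs a u => a = 0 ∨ GoodSk u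
def GoodSk : Sk S → Prop
  | .svar _ => True
  | .sarrow a b => UnitCT a ∧ GoodCT b
  | .sall u => GoodSk u
end

mutual
def reify : CT S → STy S
  | .czero => .zero
  | .cs a u => .smul a (reifyS u)
def reifyS : Sk S → STy S
  | .svar n => .var n
  | .sarrow a b => .arrow (reify a) (reify b)
  | .sall u => .all (reifyS u)
end

mutual
theorem ctEqF_refl : ∀ a : CT S, CTEqF a a
  | .czero => trivial
  | .cs a u => ⟨rfl, Or.inr (skEqF_refl u)⟩
theorem skEqF_refl : ∀ u : Sk S, SkEqF u u
  | .svar n => rfl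
  | .sarrow a b => ⟨ctEqF_refl a, ctEqF_refl b⟩
  | .sall u => skEqF_refl u
end

mutual
theorem ctEqF_symm : ∀ (a b : CT S), CTEqF a b → CTEqF b a
  | .czero, .czero, _ => trivial
  | .czero, .cs _ _, h => h
  | .cs _ _, .czero, h => h
  | .cs a u, .cs b v, ⟨h1, h2⟩ => by
      subst h1
      exact ⟨rfl, h2.imp id (skEqF_symm _ _)⟩
termination_by a _ _ => sizeOf a
theorem skEqF_symm : ∀ (u v : Sk S), SkEqF u v → SkEqF v u
  | .svar _, .svar _, h => h.symm
  | .sarrow a b, .sarrow a' b', ⟨h1, h2⟩ => ⟨ctEqF_symm _ _ h1, ctEqF_symm _ _ h2⟩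
  | .sall u, .sall v, h => skEqF_symm u v h
  termination_by u _ _ => sizeOf u
end

mutual
theorem ctEqF_trans : ∀ (a b c : CT S), CTEqF a b → CTEqF b c → CTEqF a c
  | .czero, .czero, _, _, h2 => h2
  | .czero, .cs _ _, .czero, _, _ => trivial
  | .czero, .cs b u, .cs c v, h1, h2 => show _ = _ by rw [← h2.1]; exact h1
  | .cs _ _, .czero, .czero, h1, _ => h1
  | .cs a u, .czero, .cs c v, h1, h2 => ⟨h1.trans h2.symm, Or.inl h1⟩
  | .cs a u, .cs b v, .czero, h1, h2 => h1.1.trans h2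
  | .cs a u, .cs b v, .cs c w, ⟨h1, h1'⟩, ⟨h2, h2'⟩ => by
      subst h1; subst h2
      refine ⟨rfl, ?_⟩
      rcases h1' with h | h
      · exact Or.inl h
      rcases h2' with h' | h'
      · exact Or.inl h'
      · exact Or.inr (skEqF_trans _ _ _ h h')
termination_by a _ _ _ _ => sizeOf a
theorem skEqF_trans : ∀ (u v w : Sk S), SkEqF u v → SkEqF v w → SkEqF u w
  | .svar _, .svar _, .svar _, h1, h2 => h1.trans h2
  | .sarrow a b, .sarrow a' b', .sarrow a'' b'', ⟨h1, h1'⟩, ⟨h2, h2'⟩ =>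
      ⟨ctEqF_trans _ _ _ h1 h2, ctEqF_trans _ _ _ h1' h2'⟩
  | .sall u, .sall v, .sall w, h1, h2 => skEqF_trans u v w h1 h2
  termination_by u _ _ _ _ => sizeOf u
end

theorem ctsc_eq : ∀ {a b : CT S}, CTEqF a b → ctsc a = ctsc b
  | .czero, .czero, _ => rfl
  | .czero, .cs _ _, h => h.symm
  | .cs _ _, .czero, h => h
  | .cs _ _, .cs _ _, h => h.1

theorem smulCT_congr (x : S) : ∀ {a b : CT S}, CTEqF a b → CTEqF (smulCT x a) (smulCT x b)
  | .czero, .czero, _ => trivial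
  | .czero, .cs a _, h => show x * a = 0 by rw [show a = 0 from h, mul_zero]
  | .cs a _, .czero, h => show x * a = 0 by rw [show a = 0 from h, mul_zero]
  | .cs a u, .cs b v, ⟨h1, h2⟩ => by
      subst h1
      refine ⟨rfl, ?_⟩
      rcases h2 with h | h
      · exact Or.inl (by rw [h, mul_zero])
      · exact Or.inr h

theorem allCT_congr : ∀ {a b : CT S}, CTEqF a b → CTEqF (allCT a) (allCT b)
  | .czero, .czero, _ => trivial
  | .czero, .cs _ _, h => h
  | .cs _ _, .czero, h => h
  | .cs a u, .cs b v, ⟨h1, h2⟩ => ⟨h1, h2.imp id (fun hh => hh)⟩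

theorem seq_canon {T T' : STy S} (h : SEq T T') : CTEqF (canon T) (canon T') := by
  induction h with
  | refl T => exact ctEqF_refl _
  | symm _ ih => exact ctEqF_symm _ _ ih
  | trans _ _ ih1 ih2 => exact ctEqF_trans _ _ _ ih1 ih2
  | smulZero a => show CTEqF (smulCT a .czero) .czero; exact trivial
  | zeroSmul T =>
      show CTEqF (smulCT 0 (canon T)) .czero
      cases canon T with
      | czero => exact trivial
      | cs b u => show (0 : S) * b = 0; rw [zero_mul]
  | oneSmul T =>
      show CTEqF (smulCT 1 (canon T)) (canon T)
      cases canon T with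
      | czero => exact trivial
      | cs b u => exact ⟨one_mul b, Or.inr (skEqF_refl u)⟩
  | smulSmul a b T =>
      show CTEqF (smulCT a (smulCT b (canon T))) (smulCT (a * b) (canon T))
      cases canon T with
      | czero => exact trivial
      | cs c u => exact ⟨(mul_assoc a b c).symm, Or.inr (skEqF_refl u)⟩
  | allSmul a T =>
      show CTEqF (allCT (smulCT a (canon T))) (smulCT a (allCT (canon T)))
      cases canon T with
      | czero => exact trivial
      | cs b u => exact ⟨rfl, Or.inr (skEqF_refl _)⟩
  | arrowCong _ _ ih1 ih2 => exact ⟨rfl, Or.inr ⟨ih1, ih2⟩⟩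
  | allCong _ ih => exact allCT_congr ih
  | smulCong a _ ih => exact smulCT_congr a ih

theorem all_zero_seq : SEq (STy.all (STy.zero : STy S)) STy.zero :=
  .trans (.allCong (.symm (.zeroSmul (.var 0))))
    (.trans (.allSmul 0 (.var 0)) (.zeroSmul _))

theorem seq_reify : ∀ T : STy S, SEq T (reify (canon T)) := by
  intro T
  induction T with
  | var n => exact .symm (.oneSmul _)
  | arrow A B ihA ihB => exact .trans (.arrowCong ihA ihB) (.symm (.oneSmul _))
  | all T ih =>
      show SEq (STy.all T) (reify (allCT (canon T)))
      cases hc : canon T with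
      | czero =>
          rw [hc] at ih
          exact .trans (.allCong ih) all_zero_seq
      | cs a u =>
          rw [hc] at ih
          exact .trans (.allCong ih) (.allSmul a _)
  | smul a T ih =>
      show SEq (STy.smul a T) (reify (smulCT a (canon T)))
      cases hc : canon T with
      | czero => rw [hc] at ih; exact .trans (.smulCong a ih) (.smulZero a)
      | cs b u =>
          rw [hc] at ih
          exact .trans (.smulCong a ih) (.smulSmul a b _)
  | zero => exact .refl _

/-- In the trivial ring, every type is equivalent to anything. -/
theorem seq_zero_of_trivial (h1 : (1 : S) = 0) (T : STy S) : SEq T STy.zero := by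
  have h := SEq.symm (SEq.oneSmul T)
  rw [h1] at h
  exact h.trans (.zeroSmul T)

theorem seq_var_of_trivial (h1 : (1 : S) = 0) (T : STy S) : SEq T (STy.var 0) := by
  refine (seq_zero_of_trivial h1 T).trans ?_
  have h := SEq.symm (SEq.zeroSmul (STy.var 0 : STy S))
  rw [← h1] at h
  exact h.trans (.oneSmul _)

theorem unit_wf_canon : ∀ T : STy S,
    (STy.IsUnit T → ∃ u, canon T = .cs 1 u ∧ GoodSk u) ∧
    (STy.WF T → GoodCT (canon T)) := by
  intro T
  induction T with
  | var n =>
      exact ⟨fun _ => ⟨.svar n, rfl, trivial⟩, fun _ => Or.inr trivial⟩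
  | arrow A B ihA ihB =>
      have h1 : STy.IsUnit (STy.arrow A B) → ∃ u, canon (STy.arrow A B) = .cs 1 u ∧ GoodSk u := by
        intro hu
        cases hu with
        | arrow hA hB =>
            obtain ⟨u, hcu, hgu⟩ := ihA.1 hA
            refine ⟨.sarrow (canon A) (canon B), rfl, ?_, ihB.2 hB⟩
            rw [hcu]; exact ⟨rfl, hgu⟩
      refine ⟨h1, fun hw => ?_⟩
      cases hw with
      | unit hu =>
          obtain ⟨u, hcu, hgu⟩ := h1 hu
          rw [hcu]
          exact Or.inr hgu
  | all T ih =>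
      constructor
      · intro hu
        cases hu with
        | all hT =>
            obtain ⟨u, hcu, hgu⟩ := ih.1 hT
            exact ⟨.sall u, by show allCT (canon T) = _; rw [hcu]; rfl, hgu⟩
      · intro hw
        show GoodCT (allCT (canon T))
        cases hw with
        | unit hu =>
            cases hu with
            | all hT =>
                obtain ⟨u, hcu, hgu⟩ := ih.1 hT
                rw [hcu]
                exact Or.inr hgu
        | all hT =>
            have := ih.2 hT
            cases hc : canon T with
            | czero => exact trivial
            | cs a u =>
                rw [hc] at this
                exact this.imp id (fun h => h)
  | smul a T ih =>
      constructor
      · intro hu; cases hu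
      · intro hw
        show GoodCT (smulCT a (canon T))
        cases hw with
        | unit hu => cases hu
        | smul _ hT =>
            have := ih.2 hT
            cases hc : canon T with
            | czero => exact trivial
            | cs b u =>
                rw [hc] at this
                rcases this with h | h
                · exact Or.inl (by rw [h, mul_zero])
                · exact Or.inr h
  | zero =>
      exact ⟨(by intro h; cases h), fun _ => trivial⟩

theorem shift_unit_wf : ∀ (T : STy S) (d c : ℕ),
    (STy.IsUnit T → STy.IsUnit (STy.shiftTV d c T)) ∧
    (STy.WF T → STy.WF (STy.shiftTV d c T)) := by
  intro T
  induction T with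
  | var n =>
      intro d c
      constructor <;> intro _
      · show ((if n < c then STy.var n else STy.var (n + d) : STy S)).IsUnit
        split <;> exact .var _
      · show ((if n < c then STy.var n else STy.var (n + d) : STy S)).WF
        split <;> exact .unit (.var _)
  | arrow A B ihA ihB =>
      intro d c
      constructor
      · intro h
        cases h with
        | arrow hA hB => exact .arrow ((ihA d c).1 hA) ((ihB d c).2 hB)
      · intro h
        cases h with
        | unit hu =>
            cases hu with
            | arrow hA hB => exact .unit (.arrow ((ihA d c).1 hA) ((ihB d c).2 hB))
  | all T ih =>
      intro d c
      constructor
      · intro h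
        cases h with
        | all hU => exact .all ((ih d (c + 1)).1 hU)
      · intro h
        cases h with
        | unit hu =>
            cases hu with
            | all hU => exact .unit (.all ((ih d (c + 1)).1 hU))
        | all hT => exact .all ((ih d (c + 1)).2 hT)
  | smul a T ih =>
      intro d c
      constructor
      · intro h; cases h
      · intro h
        cases h with
        | unit hu => cases hu
        | smul _ hT => exact .smul a ((ih d c).2 hT)
  | zero =>
      intro d c
      exact ⟨(by intro h; cases h), fun _ => .zero⟩

theorem subst_canon (V : STy S) (hV : STy.IsUnit V) : ∀ (T : STy S) (j : ℕ),
    (canon T = .czero → canon (T.substTV V j) = .czero) ∧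
    (∀ (a : S) (u : Sk S), canon T = .cs a u →
      ∃ u', canon (T.substTV V j) = .cs a u' ∧ (GoodSk u → GoodSk u')) := by
  intro T
  induction T with
  | var k =>
      intro j
      constructor
      · intro h; exact absurd h (by simp [canon])
      · intro a u h
        simp only [canon, CT.cs.injEq] at h
        obtain ⟨rfl, rfl⟩ := h
        show ∃ u', canon (if k = j then STy.shiftTV j 0 V else
            if j < k then STy.var (k - 1) else STy.var k) = _ ∧ _
        split
        · obtain ⟨w, hw, hgw⟩ := (unit_wf_canon _).1 ((shift_unit_wf V j 0).1 hV)
          exact ⟨w, hw, fun _ => hgw⟩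
        · split
          · exact ⟨.svar (k - 1), rfl, fun _ => trivial⟩
          · exact ⟨.svar k, rfl, fun _ => trivial⟩
  | arrow A B ihA ihB =>
      intro j
      constructor
      · intro h; exact absurd h (by simp [canon])
      · intro a u h
        simp only [canon, CT.cs.injEq] at h
        obtain ⟨rfl, rfl⟩ := h
        refine ⟨.sarrow (canon (A.substTV V j)) (canon (B.substTV V j)), rfl, ?_⟩
        rintro ⟨huA, hgB⟩
        constructor
        · -- UnitCT preserved
          cases hA : canon A with
          | czero => rw [hA] at huA; exact absurd huA (by intro h; exact h)
          | cs α w =>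
              rw [hA] at huA
              obtain ⟨hα, hgw⟩ := huA
              obtain ⟨w', hw', hgw'⟩ := (ihA j).2 α w hA
              rw [hw']
              exact ⟨hα, hgw' hgw⟩
        · -- GoodCT preserved
          cases hB : canon B with
          | czero => rw [(ihB j).1 hB]; exact trivial
          | cs β v =>
              rw [hB] at hgB
              obtain ⟨v', hv', hgv'⟩ := (ihB j).2 β v hB
              rw [hv']
              exact hgB.imp id hgv'
  | all T ih =>
      intro j
      constructor
      · intro h
        show allCT (canon (T.substTV V (j + 1))) = .czero
        have h' : canon T = .czero := by
          revert h
          show allCT (canon T) = .czero → _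
          cases canon T with
          | czero => intro _; rfl
          | cs a u => intro h; exact absurd h (by simp [allCT])
        rw [(ih (j + 1)).1 h']
        rfl
      · intro a u h
        revert h
        show allCT (canon T) = _ → _
        cases hT : canon T with
        | czero => intro h; exact absurd h (by simp [allCT])
        | cs α w =>
            intro h
            simp only [allCT, CT.cs.injEq] at h
            obtain ⟨rfl, rfl⟩ := h
            obtain ⟨w', hw', hgw'⟩ := (ih (j + 1)).2 α w hT
            refine ⟨.sall w', ?_, hgw'⟩
            show allCT (canon (T.substTV V (j + 1))) = _
            rw [hw']
            rfl
  | smul x T ih =>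
      intro j
      constructor
      · intro h
        show smulCT x (canon (T.substTV V j)) = .czero
        have h' : canon T = .czero := by
          revert h
          show smulCT x (canon T) = .czero → _
          cases canon T with
          | czero => intro _; rfl
          | cs a u => intro h; exact absurd h (by simp [smulCT])
        rw [(ih j).1 h']
        rfl
      · intro a u h
        revert h
        show smulCT x (canon T) = _ → _
        cases hT : canon T with
        | czero => intro h; exact absurd h (by simp [smulCT])
        | cs β w =>
            intro h
            simp only [smulCT, CT.cs.injEq] at h
            obtain ⟨rfl, rfl⟩ := h
            obtain ⟨w', hw', hgw'⟩ := (ih j).2 β w hT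
            refine ⟨w', ?_, hgw'⟩
            show smulCT x (canon (T.substTV V j)) = _
            rw [hw']
            rfl
  | zero =>
      intro j
      exact ⟨fun _ => rfl, fun a u h => absurd h (by simp [canon])⟩

theorem good_of_cteq (h1 : (1 : S) ≠ 0) : ∀ n : ℕ,
    (∀ a b : CT S, sizeOf a ≤ n → CTEqF a b → GoodCT a → GoodCT b) ∧
    (∀ u v : Sk S, sizeOf u ≤ n → SkEqF u v → GoodSk u → GoodSk v) ∧
    (∀ a b : CT S, sizeOf a ≤ n → CTEqF a b → UnitCT a → UnitCT b) := by
  intro n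
  induction n with
  | zero =>
      refine ⟨?_, ?_, ?_⟩ <;> intro a b hs <;>
        exact absurd hs (by cases a <;> simp <;> omega)
  | succ n ih =>
      refine ⟨?_, ?_, ?_⟩
      · rintro (_ | ⟨α, u⟩) (_ | ⟨β, v⟩) hs he hg
        · trivial
        · exact Or.inl he
        · trivial
        · obtain ⟨rfl, h⟩ := he
          rcases h with h | h
          · exact Or.inl h
          rcases hg with hg | hg
          · exact Or.inl hg
          · refine Or.inr (ih.2.1 u v ?_ h hg)
            simp at hs; omega
      · rintro (⟨k⟩ | ⟨a, c⟩ | ⟨u⟩) (⟨k'⟩ | ⟨a', c'⟩ | ⟨u'⟩) hs he hg <;>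
          try exact absurd he (by intro h; exact h)
        · trivial
        · obtain ⟨heA, heB⟩ := he
          obtain ⟨huA, hgB⟩ := hg
          have hsz : sizeOf a ≤ n ∧ sizeOf c ≤ n := by simp at hs; omega
          exact ⟨ih.2.2 a a' hsz.1 heA huA, ih.1 c c' hsz.2 heB hgB⟩
        · exact ih.2.1 u u' (by simp at hs; omega) he hg
      · rintro (_ | ⟨α, u⟩) (_ | ⟨β, v⟩) hs he hg
        · exact absurd hg (by intro h; exact h)
        · exact absurd hg (by intro h; exact h)
        · obtain ⟨hα, _⟩ := hg
          exact absurd (he.symm.trans hα) (Ne.symm h1)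
        · obtain ⟨rfl, h⟩ := he
          obtain ⟨hα, hgu⟩ := hg
          rcases h with h | h
          · exact absurd (h.symm.trans hα) (Ne.symm h1)
          · exact ⟨hα, ih.2.1 u v (by simp at hs; omega) h hgu⟩

theorem realize : ∀ n : ℕ,
    (∀ u : Sk S, sizeOf u ≤ n → GoodSk u → ∃ U, STy.IsUnit U ∧ SEq (reifyS u) U) ∧
    (∀ c : CT S, sizeOf c ≤ n → GoodCT c → ∃ T, STy.WF T ∧ SEq (reify c) T) := by
  intro n
  induction n with
  | zero =>
      refine ⟨?_, ?_⟩ <;> intro x hs <;> exact absurd hs (by cases x <;> simp <;> omega)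
  | succ n ih =>
      constructor
      · rintro (⟨k⟩ | ⟨a, c⟩ | ⟨u⟩) hs hg
        · exact ⟨.var k, .var k, .refl _⟩
        · obtain ⟨hua, hgc⟩ := hg
          cases a with
          | czero => exact absurd hua (fun h => h)
          | cs α v =>
              obtain ⟨hα, hgv⟩ := hua
              subst hα
              obtain ⟨U, hU, e⟩ := ih.1 v (by simp at hs; omega) hgv
              obtain ⟨T', hT', e'⟩ := ih.2 c (by simp at hs; omega) hgc
              exact ⟨.arrow U T', .arrow hU hT', .arrowCong ((SEq.oneSmul _).trans e) e'⟩
        · obtain ⟨U, hU, e⟩ := ih.1 u (by simp at hs; omega) hg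
          exact ⟨.all U, .all hU, .allCong e⟩
      · rintro (_ | ⟨α, u⟩) hs hg
        · exact ⟨.zero, .zero, .refl _⟩
        · rcases hg with h | h
          · subst h
            exact ⟨.zero, .zero, .zeroSmul _⟩
          · obtain ⟨U, hU, e⟩ := ih.1 u (by simp at hs; omega) h
            exact ⟨.smul α U, .smul α (.unit hU), .smulCong α e⟩

theorem main (h1 : (1 : S) ≠ 0) {Γ : List (STy S)} {t : Trm S} {T : STy S}
    (h : Typ Γ t T) :
    (∀ U ∈ Γ, STy.IsUnit U) → GoodCT (canon T) ∧ (t.IsBasis → ctsc (canon T) = 1) ∧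
      (t = Trm.zero → ctsc (canon T) = 0) := by
  induction h with
  | @ax Γ n U hget =>
      intro hΓ
      obtain ⟨u, hc, hg⟩ := (unit_wf_canon U).1 (hΓ U (List.mem_of_getElem? hget))
      exact ⟨by rw [hc]; exact Or.inr hg, fun _ => by rw [hc]; rfl, fun h => nomatch h⟩
  | @equiv Γ t T T' hT e ih =>
      intro hΓ
      obtain ⟨g, b, z⟩ := ih hΓ
      have ce := seq_canon e
      exact ⟨(good_of_cteq h1 _).1 _ _ le_rfl ce g,
        fun hb => (ctsc_eq ce).symm.trans (b hb),
        fun hz => (ctsc_eq ce).symm.trans (z hz)⟩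
  | @arrE Γ t r U T a b hT hR ihT ihR =>
      intro hΓ
      refine ⟨?_, fun hb => False.elim hb, fun h => nomatch h⟩
      have g1 := (ihT hΓ).1
      show GoodCT (smulCT (a * b) (canon T))
      cases hc : canon T with
      | czero => exact trivial
      | cs β u =>
          have e1 : canon (STy.smul a (STy.arrow U T)) =
              CT.cs (a * 1) (.sarrow (canon U) (CT.cs β u)) := by
            show smulCT a (canon (STy.arrow U T)) = _
            show smulCT a (CT.cs 1 (.sarrow (canon U) (canon T))) = _
            rw [hc]
            rfl
          rw [e1] at g1
          rcases g1 with ha | hsk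
          · rw [mul_one] at ha
            exact Or.inl (by rw [ha, zero_mul, zero_mul])
          · obtain ⟨_, hctB⟩ := hsk
            rcases hctB with hβ | hgu
            · exact Or.inl (by rw [hβ, mul_zero])
            · exact Or.inr hgu
  | @arrI Γ t U T hU hbody ih =>
      intro hΓ
      have hΓ' : ∀ V ∈ U :: Γ, STy.IsUnit V := by
        intro V hV
        rcases List.mem_cons.1 hV with rfl | hV
        · exact hU
        · exact hΓ V hV
      obtain ⟨u0, hcU, hgU⟩ := (unit_wf_canon U).1 hU
      refine ⟨Or.inr ⟨?_, (ih hΓ').1⟩, fun _ => rfl, fun h => nomatch h⟩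
      rw [hcU]
      exact ⟨rfl, hgU⟩
  | @allE Γ t T U hT hU ih =>
      intro hΓ
      obtain ⟨g, b, z⟩ := ih hΓ
      cases hc : canon T with
      | czero =>
          have e : canon (STy.all T) = CT.czero := by
            show allCT (canon T) = _
            rw [hc]
            rfl
          have hz := (subst_canon U hU T 0).1 hc
          rw [e] at g b z
          exact ⟨by rw [hz]; trivial, fun hb => by rw [hz]; exact b hb,
            fun h0 => by rw [hz]; exact z h0⟩
      | cs α u =>
          have e : canon (STy.all T) = CT.cs α (.sall u) := by
            show allCT (canon T) = _
            rw [hc]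
            rfl
          obtain ⟨u', hu', hgu'⟩ := (subst_canon U hU T 0).2 α u hc
          rw [e] at g b z
          refine ⟨?_, fun hb => by rw [hu']; exact b hb, fun h0 => by rw [hu']; exact z h0⟩
          rw [hu']
          exact g.imp id (fun h => hgu' h)
  | @allI Γ t T hT ih =>
      intro hΓ
      have hΓ' : ∀ V ∈ Γ.map (STy.shiftTV 1 0), STy.IsUnit V := by
        intro V hV
        obtain ⟨W, hW, rfl⟩ := List.mem_map.1 hV
        exact (shift_unit_wf W 1 0).1 (hΓ W hW)
      obtain ⟨g, b, z⟩ := ih hΓ'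
      cases hc : canon T with
      | czero =>
          have e : canon (STy.all T) = CT.czero := by
            show allCT (canon T) = _; rw [hc]; rfl
          rw [hc] at g b z
          exact ⟨by rw [e]; trivial, fun hb => by rw [e]; exact b hb,
            fun h0 => by rw [e]; exact z h0⟩
      | cs α u =>
          have e : canon (STy.all T) = CT.cs α (.sall u) := by
            show allCT (canon T) = _; rw [hc]; rfl
          rw [hc] at g b z
          refine ⟨?_, fun hb => by rw [e]; exact b hb, fun h0 => by rw [e]; exact z h0⟩
          rw [e]
          exact g.imp id (fun h => h)
  | @ax0 Γ =>
      intro hΓ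
      exact ⟨trivial, fun hb => False.elim hb, fun _ => rfl⟩
  | @addI Γ t r T a b ht hr ih1 ih2 =>
      intro hΓ
      refine ⟨?_, fun hb => False.elim hb, fun h => nomatch h⟩
      have g1 := (ih1 hΓ).1
      have g2 := (ih2 hΓ).1
      show GoodCT (smulCT (a + b) (canon T))
      cases hc : canon T with
      | czero => exact trivial
      | cs β u =>
          have e1 : canon (STy.smul a T) = CT.cs (a * β) u := by
            show smulCT a (canon T) = _; rw [hc]; rfl
          have e2 : canon (STy.smul b T) = CT.cs (b * β) u := by
            show smulCT b (canon T) = _; rw [hc]; rfl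
          rw [e1] at g1
          rw [e2] at g2
          rcases g1 with h1' | h1'
          · rcases g2 with h2' | h2'
            · exact Or.inl (by rw [add_mul, h1', h2', add_zero])
            · exact Or.inr h2'
          · exact Or.inr h1'
  | @smulI Γ t T a ht ih =>
      intro hΓ
      refine ⟨?_, fun hb => False.elim hb, fun h => nomatch h⟩
      have g := (ih hΓ).1
      show GoodCT (smulCT a (canon T))
      cases hc : canon T with
      | czero => exact trivial
      | cs β u =>
          rw [hc] at g
          rcases g with h | h
          · exact Or.inl (by rw [h, mul_zero])
          · exact Or.inr h
end Aux

/-- **Types of basis terms and of the null vector.**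
(1) If `b` is a basis term and `Γ ⊢ b : T` then `T ≡ U` for some unit type `U`.
(2) If `Γ ⊢ 0 : T` then `T ≡ 0̄`. -/
theorem basis_and_zero_types {S : Type} [CommRing S] :
    (∀ (b : Trm S) (Γ : List (STy S)) (T : STy S),
      (∀ U ∈ Γ, STy.IsUnit U) → STy.WF T → Trm.IsBasis b → Typ Γ b T →
      ∃ U : STy S, STy.IsUnit U ∧ SEq T U) ∧
    (∀ (Γ : List (STy S)) (T : STy S),
      (∀ U ∈ Γ, STy.IsUnit U) → STy.WF T → Typ Γ Trm.zero T → SEq T STy.zero) := by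
  constructor
  · intro b Γ T hΓ _ hb ht
    by_cases h1 : (1 : S) = 0
    · exact ⟨STy.var 0, .var 0, seq_var_of_trivial h1 T⟩
    · obtain ⟨g, bs, _⟩ := main h1 ht hΓ
      have hb1 := bs hb
      have hr := seq_reify T
      cases hc : canon T with
      | czero =>
          rw [hc] at hb1
          exact absurd (show (1 : S) = 0 from hb1.symm) h1
      | cs α u =>
          rw [hc] at g hb1 hr
          have hα : α = 1 := hb1
          have hg : GoodSk u := by
            rcases g with h | h
            · exact absurd (hα.symm.trans h) h1
            · exact h
          obtain ⟨U, hU, e⟩ := (realize (sizeOf u)).1 u le_rfl hg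
          subst hα
          exact ⟨U, hU, hr.trans ((SEq.oneSmul _).trans e)⟩
  · intro Γ T hΓ _ ht
    by_cases h1 : (1 : S) = 0
    · exact seq_zero_of_trivial h1 T
    · obtain ⟨_, _, z⟩ := main h1 ht hΓ
      have h0 := z rfl
      have hr := seq_reify T
      cases hc : canon T with
      | czero => rw [hc] at hr; exact hr
      | cs α u =>
          rw [hc] at hr h0
          have hα : α = 0 := h0
          subst hα
          exact hr.trans (.zeroSmul _)

end Lineal
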